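/- (Correctness of the shortest-path oracle) Let G = (V,E) be a weighted graph with edge weights w ≥ 0, and let d(i,j) be the shortest-path distance in G. Then w satisfies all cycle inequalities of MET(G) (i.e., for every cycle C and edge e ∈ C, w(e) ≤ Σ_{ẽ∈C, ẽ≠e} w(ẽ)) if and only if for every edge (i,j) ∈ E, w(i,j) ≤ d(i,j). -/

import Mathlib

private lemma split_at_edge {V : Type*} {G : SimpleGraph V} {u v i j : V}
    (p : G.Walk u v) (h : s(i, j) ∈ p.edges) :
    (∃ (p₁ : G.Walk u i) (p₂ : G.Walk j v),
        p.edges = p₁.edges ++ s(i, j) :: p₂.edges) ∨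
    (∃ (p₁ : G.Walk u j) (p₂ : G.Walk i v),
        p.edges = p₁.edges ++ s(i, j) :: p₂.edges) := by
  induction p with
  | nil => simp at h
  | @cons a b c hab q ih =>
    rw [SimpleGraph.Walk.edges_cons, List.mem_cons] at h
    rcases h with h | h
    · rcases Sym2.eq_iff.mp h.symm with ⟨rfl, rfl⟩ | ⟨rfl, rfl⟩
      · exact Or.inl ⟨SimpleGraph.Walk.nil, q, by simp [h]⟩
      · exact Or.inr ⟨SimpleGraph.Walk.nil, q, by simp [h]⟩
    · rcases ih h with ⟨p₁, p₂, hp⟩ | ⟨p₁, p₂, hp⟩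
      · exact Or.inl ⟨SimpleGraph.Walk.cons hab p₁, p₂, by simp [hp]⟩
      · exact Or.inr ⟨SimpleGraph.Walk.cons hab p₁, p₂, by simp [hp]⟩

private lemma sum_le_sum_of_nodup_subset {α : Type*} [DecidableEq α] (w : α → ℝ)
    {l₁ l₂ : List α} (hn : l₁.Nodup) (hs : l₁ ⊆ l₂) (h0 : ∀ x ∈ l₂, 0 ≤ w x) :
    (l₁.map w).sum ≤ (l₂.map w).sum := by
  have hle : (l₁ : Multiset α) ≤ (l₂ : Multiset α) := by
    rw [Multiset.le_iff_count]
    intro a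
    by_cases ha : a ∈ l₁
    · calc Multiset.count a (l₁ : Multiset α) ≤ 1 := by
            rw [Multiset.coe_count]; exact List.nodup_iff_count_le_one.mp hn a
        _ ≤ Multiset.count a (l₂ : Multiset α) := by
            simpa [Multiset.one_le_count_iff_mem] using hs ha
    · simp [Multiset.count_eq_zero_of_notMem, ha]
  obtain ⟨u, hu⟩ := Multiset.le_iff_exists_add.mp hle
  have hsum : ((l₂ : Multiset α).map w).sum
      = ((l₁ : Multiset α).map w).sum + (u.map w).sum := by
    rw [hu, Multiset.map_add, Multiset.sum_add]
  have h0u : 0 ≤ (u.map w).sum := by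
    apply Multiset.sum_nonneg
    intro x hx
    obtain ⟨a, ha, rfl⟩ := Multiset.mem_map.mp hx
    exact h0 a (by rw [← Multiset.mem_coe, hu]; exact Multiset.mem_add.mpr (Or.inr ha))
  have := hsum ▸ le_add_of_nonneg_right h0u
  simpa using this

/-- correctness of the shortest-path oracle: nonnegative edge weights `w`
on a graph `G` satisfy all cycle inequalities (for every cycle `C` — a closed walk with
distinct edges — and every `e ∈ C`, `w e ≤ ∑_{ẽ ∈ C, ẽ ≠ e} w ẽ`) iff for every edge
`(i,j)`, `w(i,j)` is at most the shortest-path distance from `i` to `j`, i.e. `w(i,j)`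
is at most the total weight of every walk from `i` to `j`. -/
theorem cycle_inequalities_iff_shortest_path {V : Type*} [Fintype V] [DecidableEq V]
    (G : SimpleGraph V) (w : Sym2 V → ℝ) (hw : ∀ e ∈ G.edgeSet, 0 ≤ w e) :
    (∀ (v : V) (p : G.Walk v v), p.IsCircuit →
      ∀ e ∈ p.edges, w e ≤ ((p.edges.erase e).map w).sum) ↔
    (∀ i j : V, G.Adj i j → ∀ p : G.Walk i j, w s(i, j) ≤ (p.edges.map w).sum) := by
  constructor
  · intro H i j hij p
    have h0p : ∀ x ∈ p.edges, 0 ≤ w x := fun x hx => hw x (p.edges_subset_edgeSet hx)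
    by_cases hmem : s(i, j) ∈ p.edges
    · exact List.single_le_sum (l := p.edges.map w)
        (by intro x hx; obtain ⟨a, ha, rfl⟩ := List.mem_map.mp hx; exact h0p a ha)
        _ (List.mem_map.mpr ⟨_, hmem, rfl⟩)
    · set q := p.bypass with hq
      have hqP : q.IsPath := p.bypass_isPath
      have hqsub : q.edges ⊆ p.edges := p.edges_bypass_subset
      have hqnot : s(i, j) ∉ q.edges := fun h => hmem (hqsub h)
      -- build a circuit q ++ (edge j i)
      set c : G.Walk i i := q.append (SimpleGraph.Walk.cons hij.symm SimpleGraph.Walk.nil)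
        with hc
      have hce : c.edges = q.edges ++ [s(j, i)] := by
        simp [hc, SimpleGraph.Walk.edges_append]
      have hji : s(j, i) = s(i, j) := Sym2.eq_swap
      have hcirc : c.IsCircuit := by
        constructor
        · constructor
          rw [hce, List.nodup_append]
          exact ⟨hqP.isTrail.edges_nodup, List.nodup_singleton _,
            by simpa [hji] using fun a (ha : a ∈ q.edges) (h : a = s(i, j)) => hqnot (h ▸ ha)⟩
        · intro hnil
          have : c.edges = [] := by rw [hnil]; simp
          rw [hce] at this
          simp at this
      have hemem : s(i, j) ∈ c.edges := by
        rw [hce, hji]; exact List.mem_append_right _ (List.mem_singleton_self _)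
      have := H i c hcirc s(i, j) hemem
      have herase : c.edges.erase s(i, j) = q.edges := by
        rw [hce, hji, List.erase_append_right _ hqnot]
        simp
      rw [herase] at this
      exact this.trans (sum_le_sum_of_nodup_subset w hqP.isTrail.edges_nodup hqsub h0p)
  · intro H v p hp e he
    have hadj : e ∈ G.edgeSet := p.edges_subset_edgeSet he
    induction e with
    | h i j =>
      have hij : G.Adj i j := hadj
      rcases split_at_edge p he with ⟨p₁, p₂, hpe⟩ | ⟨p₁, p₂, hpe⟩
      · -- walk from j to i : p₂ ++ p₁
        have key := H j i hij.symm (p₂.append p₁)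
        rw [Sym2.eq_swap] at key
        have hni : s(i, j) ∉ p₁.edges := by
          have := hp.edges_nodup
          rw [hpe, List.nodup_append] at this
          exact fun h => this.2.2 _ h _ List.mem_cons_self rfl
        have herase : p.edges.erase s(i, j) = p₁.edges ++ p₂.edges := by
          rw [hpe, List.erase_append_right _ hni, List.erase_cons_head]
        rw [herase]
        refine key.trans (le_of_eq ?_)
        simp [SimpleGraph.Walk.edges_append, add_comm]
      · have key := H i j hij (p₂.append p₁)
        have hni : s(i, j) ∉ p₁.edges := by
          have := hp.edges_nodup
          rw [hpe, List.nodup_append] at this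
          exact fun h => this.2.2 _ h _ List.mem_cons_self rfl
        have herase : p.edges.erase s(i, j) = p₁.edges ++ p₂.edges := by
          rw [hpe, List.erase_append_right _ hni, List.erase_cons_head]
        rw [herase]
        refine key.trans (le_of_eq ?_)
        simp [SimpleGraph.Walk.edges_append, add_comm]
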